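/- Let (Ω,P) be a probability space, α ∈ (0,1), m ≥ 1 an integer, and T > 0, β > 0, L ≥ 0, 0 < f_low ≤ f_up < ∞, A ≥ 0, B ≥ 0, r ≥ 0, η ∈ [0,1] constants. Let S_0, S_1, …, S_m and Ŝ_0, Ŝ_1, …, Ŝ_m be real random variables, let G be the σ-algebra generated by S_1,…,S_m, let F_j(x) = P(S_j ≤ x), let F̄ = (1/m)·Σ_{j=1}^m F_j, let q° = inf{x : F̄(x) ≥ 1−α}, let Ĝ(x) = (1/m)·Σ_{j=1}^m 1{S_j ≤ x}, and let q̂° and q̂ be the empirical (1−α)-quantiles of (S_1,…,S_m) and (Ŝ_1,…,Ŝ_m) respectively. Assume: (a) sup_x |F_j(x) − F_k(x)| ≤ L·(|j−k|/T)^β for all j,k ∈ {0,…,m}; (b) F̄(q°) = 1−α; (c) almost surely, for all real x ≤ y, P(x < S_0 ≤ y | G) ≤ f_up·(y−x); (d) there exist a constant f° ∈ [f_low, f_up] and an integrable random variable R with q̂° − q° = ((1−α) − Ĝ(q°))/f° + R and E|R| ≤ B; (e) Var(Ĝ(q°)) ≤ 1/(4m) + 8A/m; (f) there is an event E with P(E)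 ≥ 1−η on which |Ŝ_j − S_j| ≤ r for every j ∈ {0,…,m}. Then |P(Ŝ_0 ≤ q̂) − (1−α)| ≤ (f_up/f_low)·√(1/(4m) + 8A/m) + f_up·B + L·(m/T)^β + 4·f_up·r + η. -/

import Mathlib

open MeasureTheory ProbabilityTheory

/-- The marginal CDF of a real random variable. -/
noncomputable def cdfOf {Ω : Type*} [MeasurableSpace Ω] (P : Measure Ω)
    (X : Ω → ℝ) (x : ℝ) : ℝ :=
  (P {ω | X ω ≤ x}).toReal

/-- The average `F̄ = (1/m)·Σ_{j=1}^m F_j` of the calibration-window CDFs. -/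
noncomputable def avgCDF {Ω : Type*} [MeasurableSpace Ω] (P : Measure Ω)
    (S : ℕ → Ω → ℝ) (m : ℕ) (x : ℝ) : ℝ :=
  (1 / (m : ℝ)) * ∑ j ∈ Finset.Icc 1 m, cdfOf P (S j) x

/-- The population quantile `q° = inf{x : F̄(x) ≥ 1−α}`. -/
noncomputable def popQuantile {Ω : Type*} [MeasurableSpace Ω] (P : Measure Ω)
    (S : ℕ → Ω → ℝ) (m : ℕ) (α : ℝ) : ℝ :=
  sInf {x : ℝ | 1 - α ≤ avgCDF P S m x}

/-- The empirical calibration CDF `Ĝ(x) = (1/m)·Σ_{j=1}^m 1{S_j ≤ x}` (as a random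
variable). -/
noncomputable def empCDFat {Ω : Type*} (S : ℕ → Ω → ℝ) (m : ℕ) (x : ℝ) (ω : Ω) : ℝ :=
  (1 / (m : ℝ)) * ∑ j ∈ Finset.Icc 1 m, if S j ω ≤ x then (1 : ℝ) else 0

/-- The empirical `(1−α)`-quantile of `s_1,…,s_m`:
`inf{x : (1/m)·#{j : s_j ≤ x} ≥ 1−α}`. -/
noncomputable def empQuantile (m : ℕ) (α : ℝ) (s : ℕ → ℝ) : ℝ :=
  sInf {x : ℝ |
    1 - α ≤ ((Finset.Icc 1 m).filter (fun j => s j ≤ x)).card / (m : ℝ)}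

section AuxLemmas

lemma empQ_mem_of_ge_max {m : ℕ} (hm : 1 ≤ m) {α : ℝ} (hα0 : 0 < α) (s : ℕ → ℝ) :
    ∃ t : ℝ, ∀ u, t ≤ u →
      u ∈ {x : ℝ | 1 - α ≤ ((Finset.Icc 1 m).filter (fun j => s j ≤ x)).card / (m : ℝ)} := by
  have hne : (Finset.Icc 1 m).Nonempty := ⟨1, by simp [hm]⟩
  refine ⟨((Finset.Icc 1 m).image s).max' (hne.image s), fun u hu => ?_⟩
  have hfilter : (Finset.Icc 1 m).filter (fun j => s j ≤ u) = Finset.Icc 1 m := by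
    apply Finset.filter_true_of_mem
    intro j hj
    exact le_trans (Finset.le_max' _ _ (Finset.mem_image_of_mem s hj)) hu
  have hmpos : (0:ℝ) < (m:ℝ) := by exact_mod_cast hm
  simp only [Set.mem_setOf_eq, hfilter, Nat.card_Icc]
  simp only [Nat.add_sub_cancel]
  rw [div_self (ne_of_gt hmpos)]
  linarith

lemma empQ_set_nonempty {m : ℕ} (hm : 1 ≤ m) {α : ℝ} (hα0 : 0 < α) (s : ℕ → ℝ) :
    {x : ℝ | 1 - α ≤ ((Finset.Icc 1 m).filter (fun j => s j ≤ x)).card / (m : ℝ)}.Nonempty := by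
  obtain ⟨t, ht⟩ := empQ_mem_of_ge_max hm hα0 s
  exact ⟨t, ht t le_rfl⟩

lemma empQ_set_bddBelow {m : ℕ} (hm : 1 ≤ m) {α : ℝ} (hα1 : α < 1) (s : ℕ → ℝ) :
    BddBelow {x : ℝ | 1 - α ≤ ((Finset.Icc 1 m).filter (fun j => s j ≤ x)).card / (m : ℝ)} := by
  have hne : (Finset.Icc 1 m).Nonempty := ⟨1, by simp [hm]⟩
  refine ⟨((Finset.Icc 1 m).image s).min' (hne.image s), fun x hx => ?_⟩
  by_contra hlt
  push_neg at hlt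
  have hfilter : (Finset.Icc 1 m).filter (fun j => s j ≤ x) = ∅ := by
    apply Finset.filter_false_of_mem
    intro j hj
    push_neg
    exact lt_of_lt_of_le hlt (Finset.min'_le _ _ (Finset.mem_image_of_mem s hj))
  simp only [Set.mem_setOf_eq, hfilter, Finset.card_empty, Nat.cast_zero, zero_div] at hx
  linarith

lemma empQuantile_le_iff {m : ℕ} (hm : 1 ≤ m) {α : ℝ} (hα : α ∈ Set.Ioo (0:ℝ) 1)
    (s : ℕ → ℝ) (t : ℝ) :
    empQuantile m α s ≤ t ↔
      1 - α ≤ ((Finset.Icc 1 m).filter (fun j => s j ≤ t)).card / (m : ℝ) := by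
  constructor
  · intro hle
    -- pick δ > 0 smaller than the gap of every s j > t
    set Tb := (Finset.Icc 1 m).filter (fun j => t < s j) with hTb
    rcases Finset.eq_empty_or_nonempty Tb with hT | hT
    · -- all s j ≤ t
      have hfilter : (Finset.Icc 1 m).filter (fun j => s j ≤ t) = Finset.Icc 1 m := by
        apply Finset.filter_true_of_mem
        intro j hj
        by_contra hc
        push_neg at hc
        have : j ∈ Tb := Finset.mem_filter.2 ⟨hj, hc⟩
        simp [hT] at this
      have hmpos : (0:ℝ) < (m:ℝ) := by exact_mod_cast hm
      rw [hfilter, Nat.card_Icc]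
      simp only [Nat.add_sub_cancel]
      rw [div_self (ne_of_gt hmpos)]
      linarith [hα.1]
    · set δ := (Tb.image (fun j => s j - t)).min' (hT.image _) with hδ
      have hδpos : 0 < δ := by
        rw [hδ]
        apply lt_of_lt_of_le ?_ (le_refl _)
        have := Finset.min'_mem (Tb.image (fun j => s j - t)) (hT.image _)
        rw [Finset.mem_image] at this
        obtain ⟨j, hj, hje⟩ := this
        have : t < s j := (Finset.mem_filter.1 hj).2
        rw [← hje] at *
        linarith
      have hlt : empQuantile m α s <
          empQuantile m α s + δ := lt_add_of_pos_right _ hδpos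
      obtain ⟨x, hxmem, hxlt⟩ := exists_lt_of_csInf_lt (empQ_set_nonempty hm hα.1 s)
        (lt_of_le_of_lt (le_refl (empQuantile m α s)) hlt)
      have hxlt' : x < t + δ := lt_of_lt_of_le hxlt (by linarith)
      have hsub : (Finset.Icc 1 m).filter (fun j => s j ≤ x) ⊆
          (Finset.Icc 1 m).filter (fun j => s j ≤ t) := by
        intro j hj
        rw [Finset.mem_filter] at *
        refine ⟨hj.1, ?_⟩
        by_contra hc
        push_neg at hc
        have hjT : j ∈ Tb := Finset.mem_filter.2 ⟨hj.1, hc⟩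
        have : δ ≤ s j - t := Finset.min'_le _ _ (Finset.mem_image_of_mem _ hjT)
        linarith [hj.2]
      have hmpos : (0:ℝ) < (m:ℝ) := by exact_mod_cast hm
      refine le_trans hxmem ?_
      have hcard : (((Finset.Icc 1 m).filter (fun j => s j ≤ x)).card : ℝ)
          ≤ (((Finset.Icc 1 m).filter (fun j => s j ≤ t)).card : ℝ) := by
        exact_mod_cast Finset.card_le_card hsub
      exact (div_le_div_iff_of_pos_right hmpos).2 hcard
  · intro hmem
    exact csInf_le (empQ_set_bddBelow hm hα.2 s) hmem

lemma empQuantile_shift_le {m : ℕ} (hm : 1 ≤ m) {α : ℝ} (hα : α ∈ Set.Ioo (0:ℝ) 1)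
    (s s' : ℕ → ℝ) {r : ℝ} (hr : 0 ≤ r)
    (h : ∀ j ∈ Finset.Icc 1 m, s' j ≤ s j + r) :
    empQuantile m α s' ≤ empQuantile m α s + r := by
  apply le_of_forall_pos_le_add
  intro δ hδ
  obtain ⟨x, hxmem, hxlt⟩ := exists_lt_of_csInf_lt (empQ_set_nonempty hm hα.1 s)
    (lt_add_of_pos_right (empQuantile m α s) hδ)
  have hmem' : x + r ∈ {y : ℝ |
      1 - α ≤ ((Finset.Icc 1 m).filter (fun j => s' j ≤ y)).card / (m : ℝ)} := by
    have hsub : (Finset.Icc 1 m).filter (fun j => s j ≤ x) ⊆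
        (Finset.Icc 1 m).filter (fun j => s' j ≤ x + r) := by
      intro j hj
      rw [Finset.mem_filter] at *
      exact ⟨hj.1, by linarith [h j hj.1, hj.2]⟩
    have hmpos : (0:ℝ) < (m:ℝ) := by exact_mod_cast hm
    simp only [Set.mem_setOf_eq] at hxmem ⊢
    have hcard : (((Finset.Icc 1 m).filter (fun j => s j ≤ x)).card : ℝ)
        ≤ (((Finset.Icc 1 m).filter (fun j => s' j ≤ x + r)).card : ℝ) := by
      exact_mod_cast Finset.card_le_card hsub
    exact le_trans hxmem ((div_le_div_iff_of_pos_right hmpos).2 hcard)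
  have := csInf_le (empQ_set_bddBelow hm hα.2 s') hmem'
  unfold empQuantile at *
  linarith

variable {Ω : Type*} {m0 : MeasurableSpace Ω}

lemma abs_integral_le_sqrt_sq (P : Measure Ω) [IsProbabilityMeasure P]
    (Z : Ω → ℝ) (hZ : Integrable Z P) (hZ2 : Integrable (fun ω => Z ω ^ 2) P) :
    ∫ ω, |Z ω| ∂P ≤ Real.sqrt (∫ ω, Z ω ^ 2 ∂P) := by
  set I2 := ∫ ω, Z ω ^ 2 ∂P with hI2
  have hI2nn : 0 ≤ I2 := integral_nonneg fun ω => sq_nonneg _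
  have key : ∀ c : ℝ, 0 < c → ∫ ω, |Z ω| ∂P ≤ (c + I2 / c) / 2 := by
    intro c hc
    have hpt : ∀ ω, |Z ω| ≤ (c + Z ω ^ 2 / c) / 2 := by
      intro ω
      have h2 : (2 * |Z ω| - c) * c ≤ Z ω ^ 2 := by
        nlinarith [sq_nonneg (|Z ω| - c), sq_abs (Z ω)]
      have h3 : 2 * |Z ω| - c ≤ Z ω ^ 2 / c := (le_div_iff₀ hc).2 h2
      linarith
    calc ∫ ω, |Z ω| ∂P ≤ ∫ ω, (c + Z ω ^ 2 / c) / 2 ∂P := by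
          apply integral_mono hZ.abs _ hpt
          exact (((integrable_const c).add (hZ2.div_const c)).div_const 2)
      _ = (c + I2 / c) / 2 := by
          rw [integral_div, integral_add (integrable_const c) (hZ2.div_const c),
            integral_const, integral_div]
          simp [hI2]
  rcases eq_or_lt_of_le hI2nn with h0 | hpos
  · rw [← h0, Real.sqrt_zero]
    apply le_of_forall_pos_le_add
    intro ε hε
    have hk := key (2 * ε) (by linarith)
    rw [← h0] at hk
    simp only [zero_div, add_zero] at hk
    linarith
  · have := key (Real.sqrt I2) (Real.sqrt_pos.2 hpos)
    rwa [Real.div_sqrt, add_self_div_two] at this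

lemma measure_toReal_mono (P : Measure Ω) [IsProbabilityMeasure P] {X Y : Set Ω}
    (h : X ⊆ Y) : (P X).toReal ≤ (P Y).toReal :=
  ENNReal.toReal_mono (measure_ne_top _ _) (measure_mono h)

lemma measure_toReal_le_one (P : Measure Ω) [IsProbabilityMeasure P] (X : Set Ω) :
    (P X).toReal ≤ 1 := by
  have := measure_mono (Set.subset_univ X) (μ := P)
  rw [measure_univ] at this
  simpa using ENNReal.toReal_mono (by norm_num) this

lemma measure_toReal_union_le (P : Measure Ω) [IsProbabilityMeasure P] (X Y : Set Ω) :
    (P (X ∪ Y)).toReal ≤ (P X).toReal + (P Y).toReal := by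
  rw [← ENNReal.toReal_add (measure_ne_top _ _) (measure_ne_top _ _)]
  exact ENNReal.toReal_mono (by finiteness) (measure_union_le _ _)

lemma measure_toReal_sub_helper (P : Measure Ω) [IsProbabilityMeasure P]
    {X Y Z : Set Ω} (h : X ⊆ Y ∪ Z) :
    (P X).toReal ≤ (P Y).toReal + (P Z).toReal :=
  (measure_toReal_mono P h).trans (measure_toReal_union_le P Y Z)

lemma cond_interval_bound (P : Measure Ω) [IsProbabilityMeasure P]
    (G : MeasurableSpace Ω) (hG : G ≤ m0) (S0 : Ω → ℝ) (hS0 : Measurable[m0] S0)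
    (f_up : ℝ) (x y : ℝ) (hxy : x ≤ y)
    (hc : ∀ᵐ ω ∂P, (MeasureTheory.condExp G P
        (Set.indicator {ω' | x < S0 ω' ∧ S0 ω' ≤ y} fun _ => (1:ℝ))) ω ≤ f_up * (y - x))
    (A : Set Ω) (hA : MeasurableSet[G] A) :
    (P ({ω | x < S0 ω ∧ S0 ω ≤ y} ∩ A)).toReal ≤ f_up * (y - x) * (P A).toReal := by
  letI _i : MeasurableSpace Ω := m0
  haveI : SigmaFinite (P.trim hG) := by infer_instance
  set B := {ω | x < S0 ω ∧ S0 ω ≤ y} with hB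
  have hBmeas : MeasurableSet[m0] B :=
    MeasurableSet.inter (measurableSet_lt measurable_const hS0)
      (measurableSet_le hS0 measurable_const)
  set f := B.indicator (fun _ => (1:ℝ)) with hf
  have hfint : Integrable f P := (integrable_const (1:ℝ)).indicator hBmeas
  have h1 : (P (B ∩ A)).toReal = ∫ ω in A, f ω ∂P := by
    rw [hf, integral_indicator hBmeas]
    rw [Measure.restrict_restrict hBmeas]
    rw [setIntegral_const]
    simp [Set.inter_comm]
    rfl
  have h2 : ∫ ω in A, f ω ∂P = ∫ ω in A, (MeasureTheory.condExp G P f) ω ∂P :=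
    (setIntegral_condExp hG hfint hA).symm
  have h3 : ∫ ω in A, (MeasureTheory.condExp G P f) ω ∂P ≤ ∫ ω in A, f_up * (y - x) ∂P := by
    apply setIntegral_mono_ae_restrict
    · exact integrable_condExp.integrableOn
    · exact integrableOn_const
    · exact ae_restrict_of_ae hc
  have h4 : ∫ ω in A, f_up * (y - x) ∂P = f_up * (y - x) * (P A).toReal := by
    rw [setIntegral_const, smul_eq_mul, mul_comm]
    rfl
  rw [h1, h2]
  rw [h4] at h3
  exact h3

lemma markov_abs (P : Measure Ω) [IsProbabilityMeasure P] (W : Ω → ℝ)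
    (hW : Integrable W P) (hWm : Measurable[m0] W) {c : ℝ} (hc : 0 < c) :
    (P {ω | c ≤ |W ω|}).toReal ≤ (∫ ω, |W ω| ∂P) / c := by
  set C := {ω | c ≤ |W ω|} with hC
  have hCmeas : MeasurableSet[m0] C := measurableSet_le measurable_const hWm.abs
  have hpt : ∀ ω, C.indicator (fun _ => c) ω ≤ |W ω| := by
    intro ω
    by_cases h : ω ∈ C
    · rw [Set.indicator_of_mem h]; exact h
    · rw [Set.indicator_of_notMem h]; exact abs_nonneg _
  have := integral_mono ((integrable_const c).indicator hCmeas) hW.abs hpt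
  rw [integral_indicator_const _ hCmeas, smul_eq_mul] at this
  rw [le_div_iff₀ hc]
  exact this

lemma sum_eps_indicator_le {ε : ℝ} (hε : 0 < ε) (N : ℕ) (w : ℝ) :
    ∑ k ∈ Finset.Ico 1 N, (if (k : ℝ) * ε < w then ε else 0) ≤ |w| := by
  classical
  set Sf := (Finset.Ico 1 N).filter (fun k : ℕ => (k : ℝ) * ε < w) with hSf
  have hsum : ∑ k ∈ Finset.Ico 1 N, (if (k : ℝ) * ε < w then ε else 0)
      = Sf.card * ε := by
    rw [hSf, ← Finset.sum_filter, Finset.sum_const, nsmul_eq_mul]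
  rw [hsum]
  rcases Finset.eq_empty_or_nonempty Sf with h | h
  · simp [h, abs_nonneg]
  · obtain ⟨k0, hk0⟩ := h
    have hk0' := Finset.mem_filter.1 hk0
    have hk01 : 1 ≤ k0 := (Finset.mem_Ico.1 hk0'.1).1
    have hwpos : 0 < w := lt_of_le_of_lt (by positivity : (0:ℝ) ≤ (k0:ℝ) * ε) hk0'.2
    have hsub : Sf ⊆ Finset.Icc 1 ⌊w / ε⌋₊ := by
      intro k hk
      have hk' := Finset.mem_filter.1 hk
      refine Finset.mem_Icc.2 ⟨(Finset.mem_Ico.1 hk'.1).1, Nat.le_floor ?_⟩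
      rw [le_div_iff₀ hε]
      exact le_of_lt hk'.2
    have hcard : (Sf.card : ℝ) ≤ (⌊w / ε⌋₊ : ℝ) := by
      exact_mod_cast (Finset.card_le_card hsub).trans (by simp [Nat.card_Icc])
    have hfl : (⌊w / ε⌋₊ : ℝ) ≤ w / ε := Nat.floor_le (by positivity)
    calc (Sf.card : ℝ) * ε ≤ (w / ε) * ε := by
          apply mul_le_mul_of_nonneg_right (hcard.trans hfl) (le_of_lt hε)
      _ = w := div_mul_cancel₀ _ (ne_of_gt hε)
      _ ≤ |w| := le_abs_self w

lemma grid_bound_up (P : Measure Ω) [IsProbabilityMeasure P]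
    (G : MeasurableSpace Ω) (hG : G ≤ m0) (S0 : Ω → ℝ) (hS0 : Measurable[m0] S0)
    {f_up : ℝ} (hfup : 0 < f_up)
    (hc : ∀ᵐ ω ∂P, ∀ x y : ℝ, x ≤ y → (MeasureTheory.condExp G P
        (Set.indicator {ω' | x < S0 ω' ∧ S0 ω' ≤ y} fun _ => (1:ℝ))) ω ≤ f_up * (y - x))
    (a : ℝ) (W : Ω → ℝ) (hW : Integrable W P) (hWG : Measurable[G] W) :
    (P {ω | a < S0 ω ∧ S0 ω ≤ a + W ω}).toReal ≤ f_up * ∫ ω, |W ω| ∂P := by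
  letI _i : MeasurableSpace Ω := m0
  have hWm : Measurable[m0] W := hWG.mono hG le_rfl
  set I := ∫ ω, |W ω| ∂P with hI
  have hInn : 0 ≤ I := integral_nonneg fun ω => abs_nonneg _
  apply le_of_forall_pos_le_add
  intro δ hδ
  set ε := δ / (2 * f_up) with hεdef
  have hε : 0 < ε := by positivity
  set N := ⌈(2 * I) / (δ * ε)⌉₊ + 1 with hNdef
  have hN0 : 0 < N := Nat.succ_pos _
  have hNge : (2 * I) / (δ * ε) ≤ (N : ℝ) := by
    refine (Nat.le_ceil _).trans ?_
    exact_mod_cast Nat.le_succ _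
  set Bk : ℕ → Set Ω := fun k =>
    {ω | a + (k : ℝ) * ε < S0 ω ∧ S0 ω ≤ a + ((k : ℝ) + 1) * ε} ∩ {ω | (k : ℝ) * ε < W ω}
    with hBk
  set Ak : ℕ → Set Ω := fun k => {ω | (k : ℝ) * ε < W ω} with hAk
  set C : Set Ω := {ω | (N : ℝ) * ε ≤ |W ω|} with hC
  have hAkG : ∀ k, MeasurableSet[G] (Ak k) := by
    intro k
    have hconst : Measurable[G] (fun _ : Ω => (k : ℝ) * ε) := measurable_const
    exact measurableSet_lt hconst hWG
  -- set inclusion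
  have incl : {ω | a < S0 ω ∧ S0 ω ≤ a + W ω} ⊆ (⋃ k ∈ Finset.range N, Bk k) ∪ C := by
    rintro ω ⟨h1, h2⟩
    set u := S0 ω - a with hu
    have hupos : 0 < u := by simp [hu]; linarith
    have huW : u ≤ W ω := by simp [hu]; linarith
    set n : ℕ := (⌈u / ε⌉ - 1).toNat with hn
    have hceil1 : 1 ≤ ⌈u / ε⌉ := by
      have : (0:ℝ) < u / ε := by positivity
      exact Int.ceil_pos.2 this
    have hcast : ((n : ℤ)) = ⌈u / ε⌉ - 1 := Int.toNat_of_nonneg (by omega)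
    have hlow : (n : ℝ) < u / ε := by
      have h := Int.ceil_lt_add_one (u / ε)
      have : ((n : ℝ)) = ((⌈u / ε⌉ : ℝ)) - 1 := by exact_mod_cast congrArg (Int.cast : ℤ → ℝ) hcast
      linarith
    have hhigh : u / ε ≤ (n : ℝ) + 1 := by
      have h := Int.le_ceil (u / ε)
      have : ((n : ℝ)) = ((⌈u / ε⌉ : ℝ)) - 1 := by exact_mod_cast congrArg (Int.cast : ℤ → ℝ) hcast
      linarith
    have hlow' : (n : ℝ) * ε < u := by
      have := (mul_lt_mul_of_pos_right hlow hε)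
      rwa [div_mul_cancel₀ _ (ne_of_gt hε)] at this
    have hhigh' : u ≤ ((n : ℝ) + 1) * ε := by
      have := (mul_le_mul_of_nonneg_right hhigh (le_of_lt hε))
      rwa [div_mul_cancel₀ _ (ne_of_gt hε)] at this
    by_cases hnN : n < N
    · left
      refine Set.mem_biUnion (Finset.mem_coe.2 (Finset.mem_range.2 hnN)) ?_
      refine ⟨⟨by simp [hu] at hlow'; linarith, by simp [hu] at hhigh'; linarith⟩, ?_⟩
      exact lt_of_lt_of_le hlow' huW
    · right
      push_neg at hnN
      have : (N : ℝ) * ε ≤ (n : ℝ) * ε := by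
        apply mul_le_mul_of_nonneg_right _ (le_of_lt hε)
        exact_mod_cast hnN
      show (N : ℝ) * ε ≤ |W ω|
      calc (N : ℝ) * ε ≤ (n : ℝ) * ε := this
        _ ≤ W ω := le_of_lt (lt_of_lt_of_le hlow' huW)
        _ ≤ |W ω| := le_abs_self _
  -- measure bound
  have hmeasle : (P {ω | a < S0 ω ∧ S0 ω ≤ a + W ω}).toReal
      ≤ ∑ k ∈ Finset.range N, (P (Bk k)).toReal + (P C).toReal := by
    have h1 : P {ω | a < S0 ω ∧ S0 ω ≤ a + W ω}
        ≤ ∑ k ∈ Finset.range N, P (Bk k) + P C := by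
      refine (measure_mono incl).trans ?_
      refine (measure_union_le _ _).trans ?_
      exact add_le_add (measure_biUnion_finset_le _ _) le_rfl
    have hfin1 : ∑ k ∈ Finset.range N, P (Bk k) ≠ ⊤ :=
      (ENNReal.sum_lt_top.2 fun k _ => measure_lt_top _ _).ne
    have hfin : ∑ k ∈ Finset.range N, P (Bk k) + P C ≠ ⊤ :=
      ENNReal.add_ne_top.2 ⟨hfin1, measure_ne_top _ _⟩
    have h2 := ENNReal.toReal_mono hfin h1
    refine h2.trans_eq ?_
    rw [ENNReal.toReal_add hfin1 (measure_ne_top _ _),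
      ENNReal.toReal_sum (fun k _ => measure_ne_top _ _)]
  -- per-slice bound
  have hslice : ∀ k : ℕ, (P (Bk k)).toReal ≤ f_up * ε * (P (Ak k)).toReal := by
    intro k
    have hxy : a + (k : ℝ) * ε ≤ a + ((k : ℝ) + 1) * ε := by nlinarith
    have hcb := cond_interval_bound P G hG S0 hS0 f_up (a + (k : ℝ) * ε)
      (a + ((k : ℝ) + 1) * ε) hxy
      (hc.mono fun ω h => h _ _ hxy) (Ak k) (hAkG k)
    have hεeq : (a + ((k : ℝ) + 1) * ε) - (a + (k : ℝ) * ε) = ε := by ring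
    rw [hεeq] at hcb
    exact hcb
  -- sum of slices
  have hslice_sum : ∑ k ∈ Finset.range N, (P (Bk k)).toReal
      ≤ f_up * ε + f_up * I := by
    have hs1 : ∑ k ∈ Finset.range N, (P (Bk k)).toReal
        ≤ ∑ k ∈ Finset.range N, f_up * ε * (P (Ak k)).toReal :=
      Finset.sum_le_sum fun k _ => hslice k
    have hsplit : ∑ k ∈ Finset.range N, f_up * ε * (P (Ak k)).toReal
        = f_up * ε * (P (Ak 0)).toReal
          + ∑ k ∈ Finset.Ico 1 N, f_up * ε * (P (Ak k)).toReal := by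
      rw [Finset.range_eq_Ico, Finset.sum_eq_sum_Ico_succ_bot hN0]
    have htail : ∑ k ∈ Finset.Ico 1 N, ε * (P (Ak k)).toReal ≤ I := by
      have heach : ∀ k : ℕ, ε * (P (Ak k)).toReal
          = ∫ ω, (Ak k).indicator (fun _ => ε) ω ∂P := by
        intro k
        rw [integral_indicator_const _ (hG _ (hAkG k)), smul_eq_mul, mul_comm]
        rfl
      calc ∑ k ∈ Finset.Ico 1 N, ε * (P (Ak k)).toReal
          = ∑ k ∈ Finset.Ico 1 N, ∫ ω, (Ak k).indicator (fun _ => ε) ω ∂P :=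
            Finset.sum_congr rfl fun k _ => heach k
        _ = ∫ ω, ∑ k ∈ Finset.Ico 1 N, (Ak k).indicator (fun _ => ε) ω ∂P :=
            (integral_finset_sum _ fun k _ =>
              (integrable_const ε).indicator (hG _ (hAkG k))).symm
        _ ≤ ∫ ω, |W ω| ∂P := by
            apply integral_mono
              (integrable_finset_sum _ fun k _ =>
                (integrable_const ε).indicator (hG _ (hAkG k))) hW.abs
            intro ω
            have : ∀ k : ℕ, (Ak k).indicator (fun _ => ε) ω
                = if (k : ℝ) * ε < W ω then ε else 0 := by
              intro k
              simp [hAk, Set.indicator_apply]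
            simp only [this]
            exact sum_eps_indicator_le hε N (W ω)
    have hA0 : (P (Ak 0)).toReal ≤ 1 := measure_toReal_le_one P _
    have : ∑ k ∈ Finset.Ico 1 N, f_up * ε * (P (Ak k)).toReal
        = f_up * ∑ k ∈ Finset.Ico 1 N, ε * (P (Ak k)).toReal := by
      rw [Finset.mul_sum]
      congr 1
      ext k
      ring
    rw [hsplit, this] at hs1
    have hnn : (0:ℝ) ≤ (P (Ak 0)).toReal := ENNReal.toReal_nonneg
    have h1 : f_up * ε * (P (Ak 0)).toReal ≤ f_up * ε := by
      nlinarith [mul_pos hfup hε]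
    have h2 : f_up * ∑ k ∈ Finset.Ico 1 N, ε * (P (Ak k)).toReal ≤ f_up * I :=
      mul_le_mul_of_nonneg_left htail (le_of_lt hfup)
    linarith [hs1]
  -- tail bound
  have htailC : (P C).toReal ≤ δ / 2 := by
    have hNε : 0 < (N : ℝ) * ε := by positivity
    have h1 : (P {ω | (N : ℝ) * ε ≤ |W ω|}).toReal ≤ I / ((N : ℝ) * ε) :=
      markov_abs P W hW hWm hNε
    have h2 : 2 * I ≤ (N : ℝ) * (δ * ε) := by
      have := (div_le_iff₀ (by positivity : (0:ℝ) < δ * ε)).1 hNge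
      linarith
    have h3 : I / ((N : ℝ) * ε) ≤ δ / 2 := by
      rw [div_le_div_iff₀ hNε (by norm_num : (0:ℝ) < 2)]
      nlinarith
    exact h1.trans h3
  have hfε : f_up * ε = δ / 2 := by
    rw [hεdef]
    field_simp
  calc (P {ω | a < S0 ω ∧ S0 ω ≤ a + W ω}).toReal
      ≤ ∑ k ∈ Finset.range N, (P (Bk k)).toReal + (P C).toReal := hmeasle
    _ ≤ (f_up * ε + f_up * I) + δ / 2 := add_le_add hslice_sum htailC
    _ = f_up * I + δ := by rw [hfε]; ring

lemma grid_bound_down (P : Measure Ω) [IsProbabilityMeasure P]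
    (G : MeasurableSpace Ω) (hG : G ≤ m0) (S0 : Ω → ℝ) (hS0 : Measurable[m0] S0)
    {f_up : ℝ} (hfup : 0 < f_up)
    (hc : ∀ᵐ ω ∂P, ∀ x y : ℝ, x ≤ y → (MeasureTheory.condExp G P
        (Set.indicator {ω' | x < S0 ω' ∧ S0 ω' ≤ y} fun _ => (1:ℝ))) ω ≤ f_up * (y - x))
    (a : ℝ) (W : Ω → ℝ) (hW : Integrable W P) (hWG : Measurable[G] W) :
    (P {ω | a - W ω < S0 ω ∧ S0 ω ≤ a}).toReal ≤ f_up * ∫ ω, |W ω| ∂P := by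
  letI _i : MeasurableSpace Ω := m0
  have hWm : Measurable[m0] W := hWG.mono hG le_rfl
  set I := ∫ ω, |W ω| ∂P with hI
  have hInn : 0 ≤ I := integral_nonneg fun ω => abs_nonneg _
  apply le_of_forall_pos_le_add
  intro δ hδ
  set ε := δ / (2 * f_up) with hεdef
  have hε : 0 < ε := by positivity
  set N := ⌈(2 * I) / (δ * ε)⌉₊ + 1 with hNdef
  have hN0 : 0 < N := Nat.succ_pos _
  have hNge : (2 * I) / (δ * ε) ≤ (N : ℝ) := by
    refine (Nat.le_ceil _).trans ?_
    exact_mod_cast Nat.le_succ _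
  set Bk : ℕ → Set Ω := fun k =>
    {ω | a - ((k : ℝ) + 1) * ε < S0 ω ∧ S0 ω ≤ a - (k : ℝ) * ε} ∩ {ω | (k : ℝ) * ε < W ω}
    with hBk
  set Ak : ℕ → Set Ω := fun k => {ω | (k : ℝ) * ε < W ω} with hAk
  set C : Set Ω := {ω | (N : ℝ) * ε ≤ |W ω|} with hC
  have hAkG : ∀ k, MeasurableSet[G] (Ak k) := by
    intro k
    have hconst : Measurable[G] (fun _ : Ω => (k : ℝ) * ε) := measurable_const
    exact measurableSet_lt hconst hWG
  -- set inclusion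
  have incl : {ω | a - W ω < S0 ω ∧ S0 ω ≤ a} ⊆ (⋃ k ∈ Finset.range N, Bk k) ∪ C := by
    rintro ω ⟨h1, h2⟩
    set u := a - S0 ω with hu
    have hunn : 0 ≤ u := by simp [hu]; linarith
    have huW : u < W ω := by simp [hu]; linarith
    set n : ℕ := ⌊u / ε⌋₊ with hn
    have hlow : (n : ℝ) ≤ u / ε := Nat.floor_le (by positivity)
    have hhigh : u / ε < (n : ℝ) + 1 := Nat.lt_floor_add_one _
    have hlow' : (n : ℝ) * ε ≤ u := by
      have := (mul_le_mul_of_nonneg_right hlow (le_of_lt hε))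
      rwa [div_mul_cancel₀ _ (ne_of_gt hε)] at this
    have hhigh' : u < ((n : ℝ) + 1) * ε := by
      have := (mul_lt_mul_of_pos_right hhigh hε)
      rwa [div_mul_cancel₀ _ (ne_of_gt hε)] at this
    by_cases hnN : n < N
    · left
      refine Set.mem_biUnion (Finset.mem_coe.2 (Finset.mem_range.2 hnN)) ?_
      refine ⟨⟨by simp [hu] at hhigh'; linarith, by simp [hu] at hlow'; linarith⟩, ?_⟩
      exact lt_of_le_of_lt hlow' huW
    · right
      push_neg at hnN
      have hNn : (N : ℝ) * ε ≤ (n : ℝ) * ε := by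
        apply mul_le_mul_of_nonneg_right _ (le_of_lt hε)
        exact_mod_cast hnN
      show (N : ℝ) * ε ≤ |W ω|
      calc (N : ℝ) * ε ≤ (n : ℝ) * ε := hNn
        _ ≤ W ω := le_of_lt (lt_of_le_of_lt hlow' huW)
        _ ≤ |W ω| := le_abs_self _
  -- measure bound
  have hmeasle : (P {ω | a - W ω < S0 ω ∧ S0 ω ≤ a}).toReal
      ≤ ∑ k ∈ Finset.range N, (P (Bk k)).toReal + (P C).toReal := by
    have h1 : P {ω | a - W ω < S0 ω ∧ S0 ω ≤ a}
        ≤ ∑ k ∈ Finset.range N, P (Bk k) + P C := by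
      refine (measure_mono incl).trans ?_
      refine (measure_union_le _ _).trans ?_
      exact add_le_add (measure_biUnion_finset_le _ _) le_rfl
    have hfin1 : ∑ k ∈ Finset.range N, P (Bk k) ≠ ⊤ :=
      (ENNReal.sum_lt_top.2 fun k _ => measure_lt_top _ _).ne
    have hfin : ∑ k ∈ Finset.range N, P (Bk k) + P C ≠ ⊤ :=
      ENNReal.add_ne_top.2 ⟨hfin1, measure_ne_top _ _⟩
    have h2 := ENNReal.toReal_mono hfin h1
    refine h2.trans_eq ?_
    rw [ENNReal.toReal_add hfin1 (measure_ne_top _ _),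
      ENNReal.toReal_sum (fun k _ => measure_ne_top _ _)]
  -- per-slice bound
  have hslice : ∀ k : ℕ, (P (Bk k)).toReal ≤ f_up * ε * (P (Ak k)).toReal := by
    intro k
    have hxy : a - ((k : ℝ) + 1) * ε ≤ a - (k : ℝ) * ε := by nlinarith
    have hcb := cond_interval_bound P G hG S0 hS0 f_up (a - ((k : ℝ) + 1) * ε)
      (a - (k : ℝ) * ε) hxy
      (hc.mono fun ω h => h _ _ hxy) (Ak k) (hAkG k)
    have hεeq : (a - (k : ℝ) * ε) - (a - ((k : ℝ) + 1) * ε) = ε := by ring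
    rw [hεeq] at hcb
    exact hcb
  -- sum of slices
  have hslice_sum : ∑ k ∈ Finset.range N, (P (Bk k)).toReal
      ≤ f_up * ε + f_up * I := by
    have hs1 : ∑ k ∈ Finset.range N, (P (Bk k)).toReal
        ≤ ∑ k ∈ Finset.range N, f_up * ε * (P (Ak k)).toReal :=
      Finset.sum_le_sum fun k _ => hslice k
    have hsplit : ∑ k ∈ Finset.range N, f_up * ε * (P (Ak k)).toReal
        = f_up * ε * (P (Ak 0)).toReal
          + ∑ k ∈ Finset.Ico 1 N, f_up * ε * (P (Ak k)).toReal := by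
      rw [Finset.range_eq_Ico, Finset.sum_eq_sum_Ico_succ_bot hN0]
    have htail : ∑ k ∈ Finset.Ico 1 N, ε * (P (Ak k)).toReal ≤ I := by
      have heach : ∀ k : ℕ, ε * (P (Ak k)).toReal
          = ∫ ω, (Ak k).indicator (fun _ => ε) ω ∂P := by
        intro k
        rw [integral_indicator_const _ (hG _ (hAkG k)), smul_eq_mul, mul_comm]
        rfl
      calc ∑ k ∈ Finset.Ico 1 N, ε * (P (Ak k)).toReal
          = ∑ k ∈ Finset.Ico 1 N, ∫ ω, (Ak k).indicator (fun _ => ε) ω ∂P :=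
            Finset.sum_congr rfl fun k _ => heach k
        _ = ∫ ω, ∑ k ∈ Finset.Ico 1 N, (Ak k).indicator (fun _ => ε) ω ∂P :=
            (integral_finset_sum _ fun k _ =>
              (integrable_const ε).indicator (hG _ (hAkG k))).symm
        _ ≤ ∫ ω, |W ω| ∂P := by
            apply integral_mono
              (integrable_finset_sum _ fun k _ =>
                (integrable_const ε).indicator (hG _ (hAkG k))) hW.abs
            intro ω
            have : ∀ k : ℕ, (Ak k).indicator (fun _ => ε) ω
                = if (k : ℝ) * ε < W ω then ε else 0 := by
              intro k
              simp [hAk, Set.indicator_apply]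
            simp only [this]
            exact sum_eps_indicator_le hε N (W ω)
    have hA0 : (P (Ak 0)).toReal ≤ 1 := measure_toReal_le_one P _
    have : ∑ k ∈ Finset.Ico 1 N, f_up * ε * (P (Ak k)).toReal
        = f_up * ∑ k ∈ Finset.Ico 1 N, ε * (P (Ak k)).toReal := by
      rw [Finset.mul_sum]
      congr 1
      ext k
      ring
    rw [hsplit, this] at hs1
    have hnn : (0:ℝ) ≤ (P (Ak 0)).toReal := ENNReal.toReal_nonneg
    have h1 : f_up * ε * (P (Ak 0)).toReal ≤ f_up * ε := by
      nlinarith [mul_pos hfup hε]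
    have h2 : f_up * ∑ k ∈ Finset.Ico 1 N, ε * (P (Ak k)).toReal ≤ f_up * I :=
      mul_le_mul_of_nonneg_left htail (le_of_lt hfup)
    linarith [hs1]
  -- tail bound
  have htailC : (P C).toReal ≤ δ / 2 := by
    have hNε : 0 < (N : ℝ) * ε := by positivity
    have h1 : (P {ω | (N : ℝ) * ε ≤ |W ω|}).toReal ≤ I / ((N : ℝ) * ε) :=
      markov_abs P W hW hWm hNε
    have h2 : 2 * I ≤ (N : ℝ) * (δ * ε) := by
      have := (div_le_iff₀ (by positivity : (0:ℝ) < δ * ε)).1 hNge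
      linarith
    have h3 : I / ((N : ℝ) * ε) ≤ δ / 2 := by
      rw [div_le_div_iff₀ hNε (by norm_num : (0:ℝ) < 2)]
      nlinarith
    exact h1.trans h3
  have hfε : f_up * ε = δ / 2 := by
    rw [hεdef]
    field_simp
  calc (P {ω | a - W ω < S0 ω ∧ S0 ω ≤ a}).toReal
      ≤ ∑ k ∈ Finset.range N, (P (Bk k)).toReal + (P C).toReal := hmeasle
    _ ≤ (f_up * ε + f_up * I) + δ / 2 := add_le_add hslice_sum htailC
    _ = f_up * I + δ := by rw [hfε]; ring

end AuxLemmas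

/-- Main coverage-error decomposition (Theorem 1): under (a) Hölder-β drift,
(b) exact centring `F̄(q°) = 1−α`, (c) a.s. Lipschitz conditional CDF of the test score
given the calibration σ-algebra, (d) a Bahadur representation with remainder bound `B`,
(e) the variance bound for `Ĝ(q°)`, and (f) uniform score-estimation error `(r, η)`,
the coverage of the rolling-origin conformal interval satisfies
`|P(Ŝ_0 ≤ q̂) − (1−α)| ≤ (f_up/f_low)·√(1/(4m) + 8A/m) + f_up·B + L·(m/T)^β
  + 4·f_up·r + η`. -/
theorem rolling_origin_coverage_error
    {Ω : Type*} {m0 : MeasurableSpace Ω} (P : Measure Ω) [IsProbabilityMeasure P]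
    (α : ℝ) (hα : α ∈ Set.Ioo (0 : ℝ) 1)
    (m : ℕ) (hm : 1 ≤ m)
    (T β L f_low f_up A B r η : ℝ)
    (hT : 0 < T) (hβ : 0 < β) (hL : 0 ≤ L)
    (hflow : 0 < f_low) (hff : f_low ≤ f_up)
    (hA : 0 ≤ A) (hB : 0 ≤ B) (hr : 0 ≤ r) (hη : η ∈ Set.Icc (0 : ℝ) 1)
    (S Shat : ℕ → Ω → ℝ)
    (hSmeas : ∀ j ≤ m, Measurable (S j))
    (hShatmeas : ∀ j ≤ m, Measurable (Shat j))
    -- (a) Hölder-β local stationarity of the score CDFs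
    (ha : ∀ j ≤ m, ∀ k ≤ m, ∀ x : ℝ,
      |cdfOf P (S j) x - cdfOf P (S k) x| ≤ L * ((|(j : ℝ) - (k : ℝ)| / T) ^ β))
    -- (b) exact centring at the population quantile
    (hb : avgCDF P S m (popQuantile P S m α) = 1 - α)
    -- (c) a.s. Lipschitz conditional CDF of `S_0` given `G = σ(S_1,…,S_m)`
    (hc : ∀ᵐ ω ∂P, ∀ x y : ℝ, x ≤ y →
      MeasureTheory.condExp
          (⨆ j ∈ Finset.Icc 1 m, MeasurableSpace.comap (S j) Real.measurableSpace) P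
          (Set.indicator {ω' | x < S 0 ω' ∧ S 0 ω' ≤ y} fun _ => (1 : ℝ)) ω
        ≤ f_up * (y - x))
    -- (d) Bahadur representation with remainder bound `B`
    (hd : ∃ f0 : ℝ, f0 ∈ Set.Icc f_low f_up ∧ ∃ R : Ω → ℝ, Integrable R P ∧
      (∀ ω, empQuantile m α (fun j => S j ω) - popQuantile P S m α
        = ((1 - α) - empCDFat S m (popQuantile P S m α) ω) / f0 + R ω) ∧
      ∫ ω, |R ω| ∂P ≤ B)
    -- (e) variance bound for `Ĝ(q°)`
    (he : variance (empCDFat S m (popQuantile P S m α)) P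
      ≤ 1 / (4 * (m : ℝ)) + 8 * A / (m : ℝ))
    -- (f) uniform score-estimation error on an event of probability `≥ 1 − η`
    (hf : ∃ E : Set Ω, MeasurableSet E ∧ 1 - η ≤ (P E).toReal ∧
      ∀ ω ∈ E, ∀ j ≤ m, |Shat j ω - S j ω| ≤ r) :
    |(P {ω | Shat 0 ω ≤ empQuantile m α (fun j => Shat j ω)}).toReal - (1 - α)|
      ≤ (f_up / f_low) * Real.sqrt (1 / (4 * (m : ℝ)) + 8 * A / (m : ℝ))
        + f_up * B + L * (((m : ℝ) / T) ^ β) + 4 * f_up * r + η := by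
  classical
  obtain ⟨hα0, hα1⟩ := hα
  have hfup : 0 < f_up := lt_of_lt_of_le hflow hff
  have hmpos : (0:ℝ) < (m:ℝ) := by exact_mod_cast hm
  set q := popQuantile P S m α with hq
  set G : MeasurableSpace Ω :=
    ⨆ j ∈ Finset.Icc 1 m, MeasurableSpace.comap (S j) Real.measurableSpace with hGdef
  letI _inst : MeasurableSpace Ω := m0
  have hG : G ≤ m0 := by
    rw [hGdef]
    refine iSup_le fun j => iSup_le fun hj => ?_
    exact measurable_iff_comap_le.1 (hSmeas j (Finset.mem_Icc.1 hj).2)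
  have hS0 : Measurable (S 0) := hSmeas 0 (Nat.zero_le m)
  have hSjG : ∀ j ∈ Finset.Icc 1 m, Measurable[G] (S j) := by
    intro j hj
    have hle : MeasurableSpace.comap (S j) Real.measurableSpace ≤ G := by
      rw [hGdef]
      exact le_iSup₂ (f := fun (j : ℕ) (_ : j ∈ Finset.Icc 1 m) =>
        MeasurableSpace.comap (S j) Real.measurableSpace) j hj
    exact measurable_iff_comap_le.2 hle
  set Q : Ω → ℝ := fun ω => empQuantile m α (fun j => S j ω) with hQdef
  -- G-measurability of the empirical quantile Q
  have hQG : Measurable[G] Q := by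
    apply measurable_of_Iic
    intro t
    have hset : Q ⁻¹' (Set.Iic t) = {ω | 1 - α ≤
        (((Finset.Icc 1 m).filter (fun j => S j ω ≤ t)).card : ℝ) / (m : ℝ)} := by
      ext ω
      simp only [Set.mem_preimage, Set.mem_Iic, Set.mem_setOf_eq, hQdef]
      exact empQuantile_le_iff hm ⟨hα0, hα1⟩ (fun j => S j ω) t
    rw [hset]
    have hg : Measurable[G] (fun ω => ∑ j ∈ Finset.Icc 1 m,
        (if S j ω ≤ t then (1:ℝ) else 0)) := by
      apply Finset.measurable_sum
      intro j hj
      exact Measurable.ite (measurableSet_le (hSjG j hj) measurable_const)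
        measurable_const measurable_const
    have hcard : ∀ ω : Ω, (((Finset.Icc 1 m).filter (fun j => S j ω ≤ t)).card : ℝ)
        = ∑ j ∈ Finset.Icc 1 m, (if S j ω ≤ t then (1:ℝ) else 0) := by
      intro ω
      rw [Finset.card_filter]
      push_cast
      rfl
    have hseteq : {ω | 1 - α ≤
          (((Finset.Icc 1 m).filter (fun j => S j ω ≤ t)).card : ℝ) / (m : ℝ)}
        = {ω | 1 - α ≤
          (∑ j ∈ Finset.Icc 1 m, (if S j ω ≤ t then (1:ℝ) else 0)) / (m : ℝ)} := by
      ext ω; rw [Set.mem_setOf_eq, Set.mem_setOf_eq, hcard]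
    rw [hseteq]
    exact measurableSet_le measurable_const (hg.div_const _)
  have hQm : Measurable Q := hQG.mono hG le_rfl
  -- the empirical calibration CDF at q
  set Gh : Ω → ℝ := empCDFat S m q with hGhdef
  have hGhmeas : Measurable Gh := by
    rw [hGhdef]
    apply Measurable.const_mul
    apply Finset.measurable_sum
    intro j hj
    exact Measurable.ite (measurableSet_le (hSmeas j (Finset.mem_Icc.1 hj).2)
      measurable_const) measurable_const measurable_const
  have hGh0 : ∀ ω, 0 ≤ Gh ω := by
    intro ω
    rw [hGhdef]
    apply mul_nonneg (by positivity)
    apply Finset.sum_nonneg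
    intro j hj
    split <;> norm_num
  have hGh1 : ∀ ω, Gh ω ≤ 1 := by
    intro ω
    rw [hGhdef]
    show (1 / (m : ℝ)) * ∑ j ∈ Finset.Icc 1 m, (if S j ω ≤ q then (1:ℝ) else 0) ≤ 1
    have hsum : ∑ j ∈ Finset.Icc 1 m, (if S j ω ≤ q then (1:ℝ) else 0) ≤ (m:ℝ) := by
      have := Finset.sum_le_card_nsmul (Finset.Icc 1 m)
        (fun j => if S j ω ≤ q then (1:ℝ) else 0) 1
        (fun j _ => by split <;> norm_num)
      rw [Nat.card_Icc, Nat.add_sub_cancel, nsmul_eq_mul, mul_one] at this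
      exact this
    rw [div_mul_eq_mul_div, one_mul, div_le_one hmpos]
    exact hsum
  have hGhtop : MemLp Gh ⊤ P := memLp_top_of_bound hGhmeas.aestronglyMeasurable 1
    (ae_of_all _ fun ω => by
      rw [Real.norm_eq_abs, abs_le]; exact ⟨by linarith [hGh0 ω], hGh1 ω⟩)
  have hGhint : Integrable Gh P :=
    (MemLp.mono_exponent hGhtop le_top : MemLp Gh 1 P).integrable le_rfl
  have hGh2 : MemLp Gh 2 P := MemLp.mono_exponent hGhtop le_top
  -- expectation of Gh is 1 - α
  have hite_rw : ∀ j : ℕ, (fun ω => if S j ω ≤ q then (1:ℝ) else 0)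
      = Set.indicator {ω | S j ω ≤ q} (fun _ => (1:ℝ)) := by
    intro j
    funext ω
    simp [Set.indicator_apply, Set.mem_setOf_eq]
  have hcdf_int : ∀ j ∈ Finset.Icc 1 m,
      Integrable (fun ω => if S j ω ≤ q then (1:ℝ) else 0) P := by
    intro j hj
    rw [hite_rw j]
    exact (integrable_const 1).indicator
      (measurableSet_le (hSmeas j (Finset.mem_Icc.1 hj).2) measurable_const)
  have hEGh : ∫ ω, Gh ω ∂P = 1 - α := by
    have h1 : ∫ ω, Gh ω ∂P = (1 / (m:ℝ)) * ∑ j ∈ Finset.Icc 1 m,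
        ∫ ω, (if S j ω ≤ q then (1:ℝ) else 0) ∂P := by
      rw [hGhdef]
      show ∫ ω, (1 / (m:ℝ)) * ∑ j ∈ Finset.Icc 1 m,
        (if S j ω ≤ q then (1:ℝ) else 0) ∂P = _
      rw [integral_const_mul, integral_finset_sum _ hcdf_int]
    have h2 : ∀ j ∈ Finset.Icc 1 m,
        ∫ ω, (if S j ω ≤ q then (1:ℝ) else 0) ∂P = cdfOf P (S j) q := by
      intro j hj
      rw [hite_rw j, integral_indicator_const _
        (measurableSet_le (hSmeas j (Finset.mem_Icc.1 hj).2) measurable_const),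
        smul_eq_mul, mul_one]
      rfl
    rw [h1, Finset.sum_congr rfl h2]
    have := hb
    unfold avgCDF at this
    exact this
  -- Z and its properties
  have hZint : Integrable (fun ω => (1 - α) - Gh ω) P := (integrable_const _).sub hGhint
  have hZ2mem : MemLp (fun ω => (1 - α) - Gh ω) 2 P := (memLp_const _).sub hGh2
  have hZ2int : Integrable (fun ω => ((1 - α) - Gh ω)^2) P := by
    have := hZ2mem.integrable_sq
    simpa using this
  have hvar : variance Gh P = ∫ ω, ((1 - α) - Gh ω)^2 ∂P := by
    rw [variance_eq_integral (MemLp.aemeasurable hGh2), hEGh]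
    apply integral_congr_ae
    apply ae_of_all
    intro ω
    ring
  have hsv : ∫ ω, |(1 - α) - Gh ω| ∂P
      ≤ Real.sqrt (1 / (4 * (m:ℝ)) + 8 * A / (m:ℝ)) := by
    refine (abs_integral_le_sqrt_sq P _ hZint hZ2int).trans ?_
    apply Real.sqrt_le_sqrt
    rw [← hvar]
    exact he
  -- Bahadur representation
  obtain ⟨f0, hf0, R, hRint, hbah, hRB⟩ := hd
  have hf0pos : 0 < f0 := lt_of_lt_of_le hflow hf0.1
  set D : Ω → ℝ := fun ω => Q ω - q with hDdef
  have hDeq : ∀ ω, D ω = ((1 - α) - Gh ω) / f0 + R ω := by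
    intro ω
    exact hbah ω
  have hDint : Integrable D P := by
    have : D = fun ω => ((1 - α) - Gh ω) / f0 + R ω := funext hDeq
    rw [this]
    exact (hZint.div_const f0).add hRint
  have hDabs : ∫ ω, |D ω| ∂P
      ≤ (1/f_low) * Real.sqrt (1 / (4 * (m:ℝ)) + 8 * A / (m:ℝ)) + B := by
    have hptw : ∀ ω, |D ω| ≤ |(1 - α) - Gh ω| / f0 + |R ω| := by
      intro ω
      rw [hDeq ω]
      refine (abs_add_le _ _).trans ?_
      rw [abs_div, abs_of_pos hf0pos]
    have h1 : ∫ ω, |D ω| ∂P ≤ ∫ ω, (|(1 - α) - Gh ω| / f0 + |R ω|) ∂P :=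
      integral_mono hDint.abs ((hZint.abs.div_const f0).add hRint.abs) hptw
    have h2 : ∫ ω, (|(1 - α) - Gh ω| / f0 + |R ω|) ∂P
        = (∫ ω, |(1 - α) - Gh ω| ∂P) / f0 + ∫ ω, |R ω| ∂P := by
      rw [integral_add (hZint.abs.div_const f0) hRint.abs, integral_div]
    have h3 : (∫ ω, |(1 - α) - Gh ω| ∂P) / f0
        ≤ Real.sqrt (1 / (4 * (m:ℝ)) + 8 * A / (m:ℝ)) / f_low :=
      div_le_div₀ (Real.sqrt_nonneg _) hsv hflow hf0.1
    have h4 : Real.sqrt (1 / (4 * (m:ℝ)) + 8 * A / (m:ℝ)) / f_low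
        = (1/f_low) * Real.sqrt (1 / (4 * (m:ℝ)) + 8 * A / (m:ℝ)) := by ring
    linarith [hRB]
  -- W1 and W2
  set W1 : Ω → ℝ := fun ω => D ω + 2*r with hW1def
  set W2 : Ω → ℝ := fun ω => 2*r - D ω with hW2def
  have hDG : Measurable[G] D := hQG.sub measurable_const
  have hW1G : Measurable[G] W1 := hDG.add measurable_const
  have hW2G : Measurable[G] W2 := measurable_const.sub hDG
  have hW1int : Integrable W1 P := hDint.add (integrable_const _)
  have hW2int : Integrable W2 P := (integrable_const _).sub hDint
  have hWabs : ∀ (Wf : Ω → ℝ), Integrable Wf P → (∀ ω, |Wf ω| ≤ |D ω| + 2*r) →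
      ∫ ω, |Wf ω| ∂P ≤ ∫ ω, |D ω| ∂P + 2*r := by
    intro Wf hWf hpt
    have h1 : ∫ ω, |Wf ω| ∂P ≤ ∫ ω, (|D ω| + 2*r) ∂P :=
      integral_mono hWf.abs (hDint.abs.add (integrable_const _)) hpt
    rwa [integral_add hDint.abs (integrable_const _), integral_const, probReal_univ,
      smul_eq_mul, one_mul] at h1
  have hW1abs : ∫ ω, |W1 ω| ∂P ≤ ∫ ω, |D ω| ∂P + 2*r := by
    apply hWabs W1 hW1int
    intro ω
    rw [hW1def]
    calc |D ω + 2*r| ≤ |D ω| + |2*r| := abs_add_le _ _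
      _ = |D ω| + 2*r := by rw [abs_of_nonneg (by linarith : (0:ℝ) ≤ 2*r)]
  have hW2abs : ∫ ω, |W2 ω| ∂P ≤ ∫ ω, |D ω| ∂P + 2*r := by
    apply hWabs W2 hW2int
    intro ω
    rw [hW2def]
    calc |2*r - D ω| ≤ |2*r| + |D ω| := abs_sub _ _
      _ = |D ω| + 2*r := by
          rw [abs_of_nonneg (by linarith : (0:ℝ) ≤ 2*r)]; ring
  -- grid bounds
  have hgrid1 : (P {ω | q < S 0 ω ∧ S 0 ω ≤ q + W1 ω}).toReal
      ≤ f_up * ∫ ω, |W1 ω| ∂P :=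
    grid_bound_up P G hG (S 0) hS0 hfup hc q W1 hW1int hW1G
  have hgrid2 : (P {ω | q - W2 ω < S 0 ω ∧ S 0 ω ≤ q}).toReal
      ≤ f_up * ∫ ω, |W2 ω| ∂P :=
    grid_bound_down P G hG (S 0) hS0 hfup hc q W2 hW2int hW2G
  -- event E
  obtain ⟨Ev, hEvMeas, hEvP, hEvBound⟩ := hf
  have hEc : (P Evᶜ).toReal ≤ η := by
    have h1 : P Evᶜ = 1 - P Ev := prob_compl_eq_one_sub hEvMeas
    have h2 : (1 - P Ev).toReal = 1 - (P Ev).toReal := by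
      rw [ENNReal.toReal_sub_of_le prob_le_one ENNReal.one_ne_top, ENNReal.toReal_one]
    rw [h1, h2]
    linarith [hEvP]
  -- quantile stability on the event
  have hshift : ∀ ω ∈ Ev, |empQuantile m α (fun j => Shat j ω) - Q ω| ≤ r := by
    intro ω hω
    rw [abs_le]
    constructor
    · have h := empQuantile_shift_le hm ⟨hα0, hα1⟩ (fun j => Shat j ω)
        (fun j => S j ω) hr (fun j hj => by
          have hb := abs_le.1 (hEvBound ω hω j (Finset.mem_Icc.1 hj).2)
          linarith [hb.1])
      have hQω : Q ω = empQuantile m α (fun j => S j ω) := rfl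
      rw [hQω]
      linarith
    · have h := empQuantile_shift_le hm ⟨hα0, hα1⟩ (fun j => S j ω)
        (fun j => Shat j ω) hr (fun j hj => by
          have hb := abs_le.1 (hEvBound ω hω j (Finset.mem_Icc.1 hj).2)
          linarith [hb.2])
      have hQω : Q ω = empQuantile m α (fun j => S j ω) := rfl
      rw [hQω]
      linarith
  -- inclusions
  have hinclU : {ω | Shat 0 ω ≤ empQuantile m α (fun j => Shat j ω)} ⊆
      ({ω | S 0 ω ≤ q} ∪ {ω | q < S 0 ω ∧ S 0 ω ≤ q + W1 ω}) ∪ Evᶜ := by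
    intro ω hω
    rw [Set.mem_setOf_eq] at hω
    by_cases hE : ω ∈ Ev
    · left
      have h0 := abs_le.1 (hEvBound ω hE 0 (Nat.zero_le m))
      have hQ := abs_le.1 (hshift ω hE)
      have hS0Q : S 0 ω ≤ q + W1 ω := by
        have hW1ω : W1 ω = (Q ω - q) + 2*r := rfl
        rw [hW1ω]
        linarith
      by_cases hc0 : S 0 ω ≤ q
      · exact Or.inl hc0
      · exact Or.inr ⟨lt_of_not_ge hc0, hS0Q⟩
    · exact Or.inr hE
  have hinclL : {ω | S 0 ω ≤ q} ⊆
      ({ω | Shat 0 ω ≤ empQuantile m α (fun j => Shat j ω)}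
        ∪ {ω | q - W2 ω < S 0 ω ∧ S 0 ω ≤ q}) ∪ Evᶜ := by
    intro ω hω
    rw [Set.mem_setOf_eq] at hω
    by_cases hE : ω ∈ Ev
    · left
      have h0 := abs_le.1 (hEvBound ω hE 0 (Nat.zero_le m))
      have hQ := abs_le.1 (hshift ω hE)
      have hW2ω : W2 ω = 2*r - (Q ω - q) := rfl
      by_cases hc0 : q - W2 ω < S 0 ω
      · exact Or.inr ⟨hc0, hω⟩
      · push_neg at hc0
        rw [hW2ω] at hc0
        left
        rw [Set.mem_setOf_eq]
        linarith
    · exact Or.inr hE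
  -- measure bounds
  set p := (P {ω | Shat 0 ω ≤ empQuantile m α (fun j => Shat j ω)}).toReal with hpdef
  set p0 := (P {ω | S 0 ω ≤ q}).toReal with hp0def
  have hup : p ≤ p0 + (f_up * (∫ ω, |D ω| ∂P + 2*r) + η) := by
    have h1 := measure_toReal_sub_helper P hinclU
    have h2 := measure_toReal_union_le P {ω | S 0 ω ≤ q}
      {ω | q < S 0 ω ∧ S 0 ω ≤ q + W1 ω}
    have h3 : f_up * ∫ ω, |W1 ω| ∂P ≤ f_up * (∫ ω, |D ω| ∂P + 2*r) :=
      mul_le_mul_of_nonneg_left hW1abs (le_of_lt hfup)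
    linarith [hgrid1, hEc]
  have hlo : p0 ≤ p + (f_up * (∫ ω, |D ω| ∂P + 2*r) + η) := by
    have h1 := measure_toReal_sub_helper P hinclL
    have h2 := measure_toReal_union_le P
      {ω | Shat 0 ω ≤ empQuantile m α (fun j => Shat j ω)}
      {ω | q - W2 ω < S 0 ω ∧ S 0 ω ≤ q}
    have h3 : f_up * ∫ ω, |W2 ω| ∂P ≤ f_up * (∫ ω, |D ω| ∂P + 2*r) :=
      mul_le_mul_of_nonneg_left hW2abs (le_of_lt hfup)
    linarith [hgrid2, hEc]
  -- drift bias
  have hp0dist : |p0 - (1 - α)| ≤ L * (((m:ℝ)/T) ^ β) := by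
    rw [← hb]
    have hcdf : p0 = cdfOf P (S 0) q := rfl
    have hconst : p0 = (1/(m:ℝ)) * ∑ j ∈ Finset.Icc 1 m, cdfOf P (S 0) q := by
      rw [Finset.sum_const, Nat.card_Icc, Nat.add_sub_cancel, nsmul_eq_mul, hcdf]
      field_simp
    have havg : avgCDF P S m q
        = (1/(m:ℝ)) * ∑ j ∈ Finset.Icc 1 m, cdfOf P (S j) q := rfl
    rw [hconst, havg, ← mul_sub, ← Finset.sum_sub_distrib, abs_mul,
      abs_of_pos (by positivity : (0:ℝ) < 1/(m:ℝ))]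
    have hbound : |∑ j ∈ Finset.Icc 1 m, (cdfOf P (S 0) q - cdfOf P (S j) q)|
        ≤ (m:ℝ) * (L * (((m:ℝ)/T) ^ β)) := by
      refine (Finset.abs_sum_le_sum_abs _ _).trans ?_
      have heach : ∀ j ∈ Finset.Icc 1 m,
          |cdfOf P (S 0) q - cdfOf P (S j) q| ≤ L * (((m:ℝ)/T) ^ β) := by
        intro j hj
        have hj' := Finset.mem_Icc.1 hj
        have h := ha 0 (Nat.zero_le m) j hj'.2 q
        have habsj : |((0:ℕ):ℝ) - (j:ℝ)| = (j:ℝ) := by simp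
        rw [habsj] at h
        refine h.trans ?_
        apply mul_le_mul_of_nonneg_left _ hL
        apply Real.rpow_le_rpow (by positivity) _ (le_of_lt hβ)
        exact (div_le_div_iff_of_pos_right hT).2 (by exact_mod_cast hj'.2)
      refine (Finset.sum_le_sum heach).trans ?_
      rw [Finset.sum_const, Nat.card_Icc, Nat.add_sub_cancel, nsmul_eq_mul]
    refine (mul_le_mul_of_nonneg_left hbound
      (by positivity : (0:ℝ) ≤ 1/(m:ℝ))).trans ?_
    rw [← mul_assoc, one_div, inv_mul_cancel₀ (ne_of_gt hmpos), one_mul]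
  -- final assembly
  have habs1 : |p - p0| ≤ f_up * (∫ ω, |D ω| ∂P + 2*r) + η :=
    abs_sub_le_iff.2 ⟨by linarith, by linarith⟩
  have hkey : |p - (1 - α)| ≤ |p - p0| + |p0 - (1 - α)| := by
    have h := abs_add_le (p - p0) (p0 - (1 - α))
    simpa using h
  have hdist : f_up * (∫ ω, |D ω| ∂P + 2*r) = f_up * ∫ ω, |D ω| ∂P + f_up * (2*r) := by
    ring
  have hfD : f_up * ∫ ω, |D ω| ∂P
      ≤ f_up * ((1/f_low) * Real.sqrt (1 / (4 * (m:ℝ)) + 8 * A / (m:ℝ)) + B) :=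
    mul_le_mul_of_nonneg_left hDabs (le_of_lt hfup)
  have hexp : f_up * ((1/f_low) * Real.sqrt (1 / (4 * (m:ℝ)) + 8 * A / (m:ℝ)) + B)
      = (f_up/f_low) * Real.sqrt (1 / (4 * (m:ℝ)) + 8 * A / (m:ℝ)) + f_up * B := by
    ring
  have hrfup : 0 ≤ f_up * r := mul_nonneg (le_of_lt hfup) hr
  linarith [hkey, habs1, hp0dist]
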